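/- If G is a distance critical simple graph and x, y are vertices of G with d_G(x, y) > 3, then the graph G + xy obtained from G by adding the edge xy is also distance critical. -/

import Mathlib

open SimpleGraph

section Aux
variable {V : Type*}

private lemma mem_compl_of_ne {v a : V} (h : a ≠ v) : a ∈ ({v}ᶜ : Set V) := by simp [h]

private lemma edist_le_induce_edist (G : SimpleGraph V) {s : Set V} (a b : s) :
    G.edist a b ≤ (G.induce s).edist a b := by
  rcases eq_or_ne ((G.induce s).edist a b) ⊤ with h | h
  · simp [h]
  · obtain ⟨p, hp⟩ := exists_walk_of_edist_ne_top h
    calc G.edist a b ≤ (p.map (SimpleGraph.Embedding.induce s).toHom).length :=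
          SimpleGraph.edist_le _
      _ = p.length := by rw [Walk.length_map]
      _ = _ := hp

private lemma adj_induce_of_adj (G : SimpleGraph V) {s : Set V} {a b : V}
    (ha : a ∈ s) (hb : b ∈ s) (h : G.Adj a b) :
    (G.induce s).Adj ⟨a, ha⟩ ⟨b, hb⟩ := by simpa using h

private lemma peel (G : SimpleGraph V) (v : V)
    (hyp : ∀ (s t : V) (hs : s ∈ ({v}ᶜ : Set V)) (ht : t ∈ ({v}ᶜ : Set V)),
      G.Adj v s → G.Adj v t →
      (G.induce ({v}ᶜ : Set V)).edist ⟨s, hs⟩ ⟨t, ht⟩ ≤ 2) :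
    ∀ (n : ℕ) (a b : V) (ha : a ∈ ({v}ᶜ : Set V)) (hb : b ∈ ({v}ᶜ : Set V))
      (p : G.Walk a b), p.length = n →
      (G.induce ({v}ᶜ : Set V)).edist ⟨a, ha⟩ ⟨b, hb⟩ ≤ n := by
  intro n
  induction n using Nat.strong_induction_on with
  | _ n ih =>
  intro a b ha hb p hn
  cases p with
  | nil => simp
  | cons h q =>
    rename_i c
    by_cases hc : c = v
    · cases q with
      | nil =>
        rw [hc] at hb; simp at hb
      | cons h2 r =>
        rename_i t
        have htv : t ≠ v := (hc ▸ h2 : G.Adj v t).ne'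
        have ht : t ∈ ({v}ᶜ : Set V) := mem_compl_of_ne htv
        have h1 := hyp a t ha ht (hc ▸ h.symm) (hc ▸ h2)
        have hr : r.length < n := by simp only [Walk.length_cons] at hn; omega
        have h3 := ih r.length hr t b ht hb r rfl
        calc (G.induce ({v}ᶜ : Set V)).edist ⟨a, ha⟩ ⟨b, hb⟩
            ≤ _ + _ := SimpleGraph.edist_triangle (v := (⟨t, ht⟩ : ({v}ᶜ : Set V)))
          _ ≤ 2 + (r.length : ℕ∞) := add_le_add h1 h3
          _ = ((r.length + 2 : ℕ) : ℕ∞) := by push_cast; ring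
          _ ≤ n := by
              have : n = r.length + 2 := by simp only [Walk.length_cons] at hn; omega
              simp [this]
    · have hcm : c ∈ ({v}ᶜ : Set V) := mem_compl_of_ne hc
      have h1 : (G.induce ({v}ᶜ : Set V)).edist ⟨a, ha⟩ ⟨c, hcm⟩ ≤ 1 :=
        (adj_induce_of_adj G ha hcm h).toWalk.edist_le
      have hq : q.length < n := by simp only [Walk.length_cons] at hn; omega
      have h3 := ih q.length hq c b hcm hb q rfl
      calc (G.induce ({v}ᶜ : Set V)).edist ⟨a, ha⟩ ⟨b, hb⟩
          ≤ _ + _ := SimpleGraph.edist_triangle (v := (⟨c, hcm⟩ : ({v}ᶜ : Set V)))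
        _ ≤ 1 + (q.length : ℕ∞) := add_le_add h1 h3
        _ = ((q.length + 1 : ℕ) : ℕ∞) := by push_cast; ring
        _ ≤ n := by
            have : n = q.length + 1 := by simpa using hn.symm
            simp [this]

private lemma exists_pair (G : SimpleGraph V) {v : V}
    (hcrit : ∃ a b : ({v}ᶜ : Set V),
      (G.induce ({v}ᶜ : Set V)).edist a b ≠ G.edist (a : V) (b : V)) :
    ∃ s t : ({v}ᶜ : Set V), G.Adj v s ∧ G.Adj v t ∧
      2 < (G.induce ({v}ᶜ : Set V)).edist s t := by
  obtain ⟨⟨a, ha⟩, ⟨b, hb⟩, hab⟩ := hcrit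
  have hle := edist_le_induce_edist G (⟨a, ha⟩ : ({v}ᶜ : Set V)) ⟨b, hb⟩
  have hlt : G.edist a b < (G.induce ({v}ᶜ : Set V)).edist ⟨a, ha⟩ ⟨b, hb⟩ :=
    hle.lt_of_ne (Ne.symm hab)
  by_contra hcon
  push_neg at hcon
  have hne : G.edist a b ≠ ⊤ := hlt.ne_top
  obtain ⟨p, hp⟩ := exists_walk_of_edist_ne_top hne
  have hpeel := peel G v
    (fun s t hs ht h1 h2 => hcon ⟨s, hs⟩ ⟨t, ht⟩ h1 h2)
    p.length a b ha hb p rfl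
  rw [hp] at hpeel
  exact absurd hpeel (not_le.mpr hlt)

end Aux

/-- A graph is *distance critical* if for every vertex `v` there is a pair of vertices of
`G − v` whose distance in `G − v` differs from their distance in `G`
(distances are `ℕ∞`-valued, `⊤` when there is no connecting path). -/
def IsDistanceCritical {V : Type*} (G : SimpleGraph V) : Prop :=
  ∀ v : V, ∃ x y : ({v}ᶜ : Set V),
    (G.induce ({v}ᶜ : Set V)).edist x y ≠ G.edist (x : V) (y : V)

/-- The graph obtained from `G` by adding the edge `xy`. -/
def addEdge {V : Type*} (G : SimpleGraph V) (x y : V) : SimpleGraph V :=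
  G ⊔ SimpleGraph.edge x y

theorem stmt_6 {V : Type*} [Fintype V] (G : SimpleGraph V)
    (hG : IsDistanceCritical G) (x y : V) (hd : 3 < G.edist x y) :
    IsDistanceCritical (addEdge G x y) := by
  have hxyne : x ≠ y := by
    rintro rfl
    simp [edist_self] at hd
  have hxy3 : ∀ (p : G.Walk x y), 3 < (p.length : ℕ∞) → False → False := fun _ _ h => h
  -- helper: no G-walk from x to y of length ≤ 3
  have hno3 : ∀ (p : G.Walk x y), (p.length : ℕ∞) ≤ 3 → False := by
    intro p hp
    exact absurd (le_trans (SimpleGraph.edist_le p) hp) (not_le.mpr hd)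
  intro v
  by_cases hv : v = x ∨ v = y
  · -- removing x or y : the new edge disappears, G − v = H − v
    obtain ⟨a, b, hab⟩ := hG v
    refine ⟨a, b, ?_⟩
    have hEq : (addEdge G x y).induce ({v}ᶜ : Set V) = G.induce ({v}ᶜ : Set V) := by
      ext ⟨p, hp⟩ ⟨q, hq⟩
      simp only [comap_adj, Function.Embedding.coe_subtype, addEdge, sup_adj, edge_adj]
      constructor
      · rintro (h | ⟨(⟨rfl, rfl⟩ | ⟨rfl, rfl⟩), hne⟩)
        · exact h
        · rcases hv with rfl | rfl
          · simp at hp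
          · simp at hq
        · rcases hv with rfl | rfl
          · simp at hq
          · simp at hp
      · exact Or.inl
    rw [hEq]
    have h1 : G.edist (a : V) b < (G.induce ({v}ᶜ : Set V)).edist a b :=
      (edist_le_induce_edist G a b).lt_of_ne (Ne.symm hab)
    have h2 : (addEdge G x y).edist (a : V) b ≤ G.edist (a : V) b :=
      edist_anti le_sup_left
    exact (h2.trans_lt h1).ne'
  · push_neg at hv
    obtain ⟨hvx, hvy⟩ := hv
    obtain ⟨s, t, hvs, hvt, h2⟩ := exists_pair G (hG v)
    refine ⟨s, t, ?_⟩
    have hHsv : (addEdge G x y).Adj (s : V) v := Or.inl hvs.symm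
    have hHvt : (addEdge G x y).Adj v (t : V) := Or.inl hvt
    have hH2 : (addEdge G x y).edist (s : V) (t : V) ≤ 2 := by
      have := SimpleGraph.edist_le (Walk.cons hHsv (Walk.cons hHvt Walk.nil))
      simpa using this
    -- key fact: no walk of length ≤ 2 between s and t in (G+xy) − v
    suffices h3 : 2 < ((addEdge G x y).induce ({v}ᶜ : Set V)).edist s t by
      intro hEq
      rw [hEq] at h3
      exact absurd hH2 (not_le.mpr h3)
    by_contra hcon
    push_neg at hcon
    have hne : ((addEdge G x y).induce ({v}ᶜ : Set V)).edist s t ≠ ⊤ := by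
      intro h; rw [h] at hcon; simp at hcon
    obtain ⟨p, hp⟩ := exists_walk_of_edist_ne_top hne
    have hlen : p.length ≤ 2 := by
      rw [← hp] at hcon
      exact_mod_cast hcon
    -- decompose adjacency in the induced graph of H
    have hadj : ∀ (a b : ({v}ᶜ : Set V)),
        ((addEdge G x y).induce ({v}ᶜ : Set V)).Adj a b →
        G.Adj a b ∨ ((a : V) = x ∧ (b : V) = y) ∨ ((a : V) = y ∧ (b : V) = x) := by
      rintro ⟨a, ha⟩ ⟨b, hb⟩ h
      simp only [comap_adj, Function.Embedding.coe_subtype, addEdge, sup_adj, edge_adj] at h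
      tauto
    -- contradictions from G-adjacency chains inside {v}ᶜ
    have key1 : G.Adj (s : V) (t : V) → False := by
      intro h
      have := (adj_induce_of_adj G s.2 t.2 h).toWalk.edist_le
      simp only [Subtype.coe_eta] at this
      exact absurd (this.trans (by norm_num)) (not_le.mpr h2)
    have key2 : ∀ (m : ({v}ᶜ : Set V)), G.Adj (s : V) m → G.Adj (m : V) t → False := by
      intro m hsm hmt
      have e1 : (G.induce ({v}ᶜ : Set V)).edist s m ≤ 1 := by
        have := (adj_induce_of_adj G s.2 m.2 hsm).toWalk.edist_le
        simpa using this
      have e2 : (G.induce ({v}ᶜ : Set V)).edist m t ≤ 1 := by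
        have := (adj_induce_of_adj G m.2 t.2 hmt).toWalk.edist_le
        simpa using this
      have := (SimpleGraph.edist_triangle (u := s) (v := m) (w := t)
        (G := G.induce ({v}ᶜ : Set V))).trans (add_le_add e1 e2)
      norm_num at this
      exact absurd this (not_le.mpr h2)
    -- s ≠ t
    have hst : (s : V) ≠ (t : V) := by
      intro h
      have : s = t := Subtype.ext h
      rw [this] at h2
      simp [SimpleGraph.edist_self] at h2
    cases p with
    | nil => exact hst rfl
    | cons h q =>
      rename_i m
      cases q with
      | nil =>
        -- length 1 : H.Adj s t
        rcases hadj s t h with hG1 | ⟨hsx, hty⟩ | ⟨hsy, htx⟩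
        · exact key1 hG1
        · -- s = x, t = y : walk x - v - y of length 2 in G
          have a1 : G.Adj x v := by rw [← hsx]; exact hvs.symm
          have a2 : G.Adj v y := by rw [← hty]; exact hvt
          exact hno3 (Walk.cons a1 (Walk.cons a2 Walk.nil)) (by norm_num)
        · -- s = y, t = x : walk x - v - y
          have a1 : G.Adj x v := by rw [← htx]; exact hvt.symm
          have a2 : G.Adj v y := by rw [← hsy]; exact hvs
          exact hno3 (Walk.cons a1 (Walk.cons a2 Walk.nil)) (by norm_num)
      | cons h' r =>
        rename_i m2
        cases r with
        | nil =>
          -- length 2 : H.Adj s m, H.Adj m t  (here m2 = t)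
          rcases hadj s m h with hG1 | ⟨hsx, hmy⟩ | ⟨hsy, hmx⟩
          · rcases hadj m t h' with hG2 | ⟨hmx, hty⟩ | ⟨hmy, htx⟩
            · exact key2 m hG1 hG2
            · -- m = x, t = y : x - s - v - y
              have a1 : G.Adj x (s : V) := by rw [← hmx]; exact hG1.symm
              have a2 : G.Adj (s : V) v := hvs.symm
              have a3 : G.Adj v y := by rw [← hty]; exact hvt
              exact hno3 (Walk.cons a1 (Walk.cons a2 (Walk.cons a3 Walk.nil))) (by norm_num)
            · -- m = y, t = x : x - v - s - y
              have a1 : G.Adj x v := by rw [← htx]; exact hvt.symm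
              have a2 : G.Adj v (s : V) := hvs
              have a3 : G.Adj (s : V) y := by rw [← hmy]; exact hG1
              exact hno3 (Walk.cons a1 (Walk.cons a2 (Walk.cons a3 Walk.nil))) (by norm_num)
          · -- s = x, m = y
            rcases hadj m t h' with hG2 | ⟨hmx, hty⟩ | ⟨hmy2, htx⟩
            · -- G.Adj y t : x - v - t - y
              have a1 : G.Adj x v := by rw [← hsx]; exact hvs.symm
              have a2 : G.Adj v (t : V) := hvt
              have a3 : G.Adj (t : V) y := by rw [← hmy]; exact hG2.symm
              exact hno3 (Walk.cons a1 (Walk.cons a2 (Walk.cons a3 Walk.nil))) (by norm_num)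
            · exact hxyne (by rw [← hmx, hmy])
            · exact hst (by rw [hsx, htx])
          · -- s = y, m = x
            rcases hadj m t h' with hG2 | ⟨hmx2, hty⟩ | ⟨hmy, htx⟩
            · -- G.Adj x t : x - t - v - y
              have a1 : G.Adj x (t : V) := by rw [← hmx]; exact hG2
              have a2 : G.Adj (t : V) v := hvt.symm
              have a3 : G.Adj v y := by rw [← hsy]; exact hvs
              exact hno3 (Walk.cons a1 (Walk.cons a2 (Walk.cons a3 Walk.nil))) (by norm_num)
            · exact hst (by rw [hsy, hty])
            · exact hxyne (by rw [← hmx, hmy])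
        | cons h'' r' =>
          simp at hlen
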